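/- (Single-variable decision procedure, correctness of SMT-to-BFA.) Let φ be a single-variable regular-membership formula over alphabet α, and let B(φ) be the Boolean finite automaton defined by structural recursion: atoms 'x ∈ L' are translated to the NFA-to-BFA translation of an NFA recognizing L, conjunctions to BFA intersections, disjunctions to BFA unions, and negations to BFA complements. Then for every word x : List α, x satisfies φ if and only if x is accepted by B(φ). -/

import Mathlib

/-- A Boolean finite automaton over alphabet `α` with state type `Q`. -/
structure BFA (α : Type) (Q : Type) where
  I : (Q → Prop) → Prop
  F : Q → Prop
  δ : Q → α → (Q → Prop) → Prop

/-- A word `w` is accepted by the BFA `B` iff, after substituting transitions for states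
symbol by symbol starting from the initial Boolean function, the resulting Boolean function
holds on the final assignment. -/
def BFA.Accepts {α Q : Type} (B : BFA α Q) (w : List α) : Prop :=
  (List.foldl (fun G a => fun v => G (fun q => B.δ q a v)) B.I w) B.F

/-- BFA union: disjoint union of states, disjunction of initial functions. -/
def BFA.union {α Q₁ Q₂ : Type} (B₁ : BFA α Q₁) (B₂ : BFA α Q₂) : BFA α (Q₁ ⊕ Q₂) :=
  { I := fun v => B₁.I (v ∘ Sum.inl) ∨ B₂.I (v ∘ Sum.inr)
    F := Sum.elim B₁.F B₂.F
    δ := fun q a v =>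
      match q with
      | Sum.inl q => B₁.δ q a (v ∘ Sum.inl)
      | Sum.inr q => B₂.δ q a (v ∘ Sum.inr) }

/-- BFA intersection: disjoint union of states, conjunction of initial functions. -/
def BFA.inter {α Q₁ Q₂ : Type} (B₁ : BFA α Q₁) (B₂ : BFA α Q₂) : BFA α (Q₁ ⊕ Q₂) :=
  { I := fun v => B₁.I (v ∘ Sum.inl) ∧ B₂.I (v ∘ Sum.inr)
    F := Sum.elim B₁.F B₂.F
    δ := fun q a v =>
      match q with
      | Sum.inl q => B₁.δ q a (v ∘ Sum.inl)
      | Sum.inr q => B₂.δ q a (v ∘ Sum.inr) }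

/-- BFA complement: negate the initial function. -/
def BFA.compl {α Q : Type} (B : BFA α Q) : BFA α Q :=
  { I := fun v => ¬ B.I v
    F := B.F
    δ := B.δ }

/-- The NFA-to-BFA translation. -/
def NFA.toBFA {α Q : Type} (M : NFA α Q) : BFA α Q :=
  { I := fun v => ∃ q ∈ M.start, v q
    F := fun q => q ∈ M.accept
    δ := fun q a v => ∃ q' ∈ M.step q a, v q' }

/-- Single-variable regular-membership formulas over alphabet `α`:
conjunction, disjunction, negation, and atoms `x ∈ L` where the regular
language `L` is presented by an NFA. -/
inductive RegFormula (α : Type) : Type 1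
  | atom : (σ : Type) → NFA α σ → RegFormula α
  | and : RegFormula α → RegFormula α → RegFormula α
  | or : RegFormula α → RegFormula α → RegFormula α
  | not : RegFormula α → RegFormula α

/-- Satisfaction of a single-variable regular-membership formula by a word `x`,
with the evident Boolean semantics and `x ∈ L` interpreted as language membership. -/
def RegFormula.Sat {α : Type} (x : List α) : RegFormula α → Prop
  | atom _ M => x ∈ M.accepts
  | and φ ψ => φ.Sat x ∧ ψ.Sat x
  | or φ ψ => φ.Sat x ∨ ψ.Sat x
  | not φ => ¬ φ.Sat x

/-- The SMT-to-BFA translation: atoms via NFA-to-BFA, conjunctions via BFA intersection,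
disjunctions via BFA union, negations via BFA complement. -/
def RegFormula.toBFA {α : Type} : RegFormula α → (Q : Type) × BFA α Q
  | atom σ M => ⟨σ, M.toBFA⟩
  | and φ ψ => ⟨_, BFA.inter φ.toBFA.2 ψ.toBFA.2⟩
  | or φ ψ => ⟨_, BFA.union φ.toBFA.2 ψ.toBFA.2⟩
  | not φ => ⟨_, BFA.compl φ.toBFA.2⟩

lemma bfa_foldl_compl {α Q : Type} (B : BFA α Q) (w : List α) (G : (Q → Prop) → Prop) :
    List.foldl (fun G a => fun v => G (fun q => (BFA.compl B).δ q a v))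
      (fun v => ¬ G v) w =
    fun v => ¬ (List.foldl (fun G a => fun v => G (fun q => B.δ q a v)) G w) v := by
  induction w generalizing G with
  | nil => rfl
  | cons a w ih => simpa [List.foldl, BFA.compl] using ih (fun v => G (fun q => B.δ q a v))

lemma bfa_foldl_inter {α Q₁ Q₂ : Type} (B₁ : BFA α Q₁) (B₂ : BFA α Q₂) (w : List α)
    (G₁ : (Q₁ → Prop) → Prop) (G₂ : (Q₂ → Prop) → Prop) :
    List.foldl (fun G a => fun v => G (fun q => (BFA.inter B₁ B₂).δ q a v))
      (fun v => G₁ (v ∘ Sum.inl) ∧ G₂ (v ∘ Sum.inr)) w =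
    fun v => (List.foldl (fun G a => fun v => G (fun q => B₁.δ q a v)) G₁ w) (v ∘ Sum.inl) ∧
      (List.foldl (fun G a => fun v => G (fun q => B₂.δ q a v)) G₂ w) (v ∘ Sum.inr) := by
  induction w generalizing G₁ G₂ with
  | nil => rfl
  | cons a w ih =>
    exact
      ih (fun u => G₁ (fun q => B₁.δ q a u)) (fun u => G₂ (fun q => B₂.δ q a u))

lemma bfa_foldl_union {α Q₁ Q₂ : Type} (B₁ : BFA α Q₁) (B₂ : BFA α Q₂) (w : List α)
    (G₁ : (Q₁ → Prop) → Prop) (G₂ : (Q₂ → Prop) → Prop) :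
    List.foldl (fun G a => fun v => G (fun q => (BFA.union B₁ B₂).δ q a v))
      (fun v => G₁ (v ∘ Sum.inl) ∨ G₂ (v ∘ Sum.inr)) w =
    fun v => (List.foldl (fun G a => fun v => G (fun q => B₁.δ q a v)) G₁ w) (v ∘ Sum.inl) ∨
      (List.foldl (fun G a => fun v => G (fun q => B₂.δ q a v)) G₂ w) (v ∘ Sum.inr) := by
  induction w generalizing G₁ G₂ with
  | nil => rfl
  | cons a w ih =>
    exact
      ih (fun u => G₁ (fun q => B₁.δ q a u)) (fun u => G₂ (fun q => B₂.δ q a u))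

lemma bfa_foldl_nfa {α Q : Type} (M : NFA α Q) (w : List α) (S : Set Q) :
    List.foldl (fun G a => fun v => G (fun q => M.toBFA.δ q a v))
      (fun v => ∃ q ∈ S, v q) w =
    fun v => ∃ q ∈ M.evalFrom S w, v q := by
  induction w generalizing S with
  | nil => rfl
  | cons a w ih =>
    have h : (fun v => (fun v => ∃ q ∈ S, v q) (fun q => M.toBFA.δ q a v)) =
        fun v : Q → Prop => ∃ q ∈ M.stepSet S a, v q := by
      funext v
      apply propext
      simp only [NFA.toBFA, NFA.stepSet, Set.mem_iUnion]
      constructor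
      · rintro ⟨q, hq, q', hq', hv⟩; exact ⟨q', ⟨q, hq, hq'⟩, hv⟩
      · rintro ⟨q', ⟨q, hq, hq'⟩, hv⟩; exact ⟨q, hq, q', hq', hv⟩
    simp only [List.foldl, h, ih, NFA.evalFrom, List.foldl_cons]

/-- Correctness of SMT-to-BFA: a word satisfies a single-variable regular-membership formula
iff it is accepted by the Boolean finite automaton produced from the formula. -/
theorem RegFormula.sat_iff_toBFA_accepts {α : Type} (φ : RegFormula α) (x : List α) :
    φ.Sat x ↔ φ.toBFA.2.Accepts x := by
  induction φ with
  | atom σ M =>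
    show x ∈ M.accepts ↔ _
    rw [BFA.Accepts]
    simp only [RegFormula.toBFA]
    show _ ↔ (List.foldl _ (fun v => ∃ q ∈ M.start, v q) x) M.toBFA.F
    rw [bfa_foldl_nfa]
    simp only [NFA.accepts, NFA.toBFA, NFA.eval, Set.mem_setOf_eq]
    constructor
    · rintro ⟨q, h1, h2⟩; exact ⟨q, h2, h1⟩
    · rintro ⟨q, h1, h2⟩; exact ⟨q, h2, h1⟩
  | and φ ψ ihφ ihψ =>
    show _ ∧ _ ↔ _
    rw [BFA.Accepts]
    simp only [RegFormula.toBFA]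
    show _ ↔ (List.foldl _ (fun v => φ.toBFA.2.I (v ∘ Sum.inl) ∧ ψ.toBFA.2.I (v ∘ Sum.inr)) x) _
    rw [bfa_foldl_inter]
    exact and_congr (by rw [ihφ]; rfl) (by rw [ihψ]; rfl)
  | or φ ψ ihφ ihψ =>
    show _ ∨ _ ↔ _
    rw [BFA.Accepts]
    simp only [RegFormula.toBFA]
    show _ ↔ (List.foldl _ (fun v => φ.toBFA.2.I (v ∘ Sum.inl) ∨ ψ.toBFA.2.I (v ∘ Sum.inr)) x) _
    rw [bfa_foldl_union]
    exact or_congr (by rw [ihφ]; rfl) (by rw [ihψ]; rfl)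
  | not φ ihφ =>
    show ¬ _ ↔ _
    rw [BFA.Accepts]
    simp only [RegFormula.toBFA]
    show _ ↔ (List.foldl _ (fun v => ¬ φ.toBFA.2.I v) x) _
    rw [bfa_foldl_compl]
    exact not_congr ihφ
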